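/- arXiv:1410.3445 — 2 statements merged into one kernel-verified Lean document; each statement's English description precedes it below -/
import Mathlib

section
/- Let X and Y be complex Banach spaces, let c > 0, φ ∈ (0, π/2), 0 ≤ μ < 1, C₀ ≥ 0, and t ≥ 0. Let g : ℝ → X be continuously differentiable, and set a(s,t) := ∫_0^t e^{s(t−τ)} g'(τ) dτ ∈ X. Let F be a continuous function from the ray { ρ·e^{i(π−φ)} : ρ ≥ c } to the space of bounded linear operators X → Y, satisfying ‖F(ρ·e^{i(π−φ)})‖ ≤ C₀·ρ^μ for all ρ ≥ c. Then the function ρ ↦ ρ^{−1} F(ρ·e^{i(π−φ)}) ( a(ρ·e^{i(π−φ)}, t) ) is Bochner integrable on [c, ∞), and ‖ ∫_c^∞ ρ^{−1} F(ρ·e^{i(π−φ)}) ( a(ρ·e^{i(π−φ)}, t) ) dρ ‖ ≤ C₀ · ( max_{0≤τ≤t} ‖g'(τ)‖ ) · c^{μ−1} / ((1−μ)·cos φ). -/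
open MeasureTheory Real

/-- `a(s,t) = ∫_0^t e^{s(t-τ)} g'(τ) dτ`. -/
noncomputable def aInt {X : Type*} [NormedAddCommGroup X] [NormedSpace ℂ X]
    (g : ℝ → X) (s : ℂ) (t : ℝ) : X :=
  ∫ τ in (0:ℝ)..t, Complex.exp (s * (t - τ)) • deriv g τ

lemma exp_int_bound {r t : ℝ} (hr : 0 < r) (ht : 0 ≤ t) :
    ∫ τ in (0:ℝ)..t, Real.exp (-r * (t - τ)) ≤ 1 / r := by
  have hderiv : ∀ τ ∈ Set.uIcc (0:ℝ) t,
      HasDerivAt (fun u => Real.exp (-r * (t - u)) / r) (Real.exp (-r * (t - τ))) τ := by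
    intro τ _
    have h1 : HasDerivAt (fun u : ℝ => -r * (t - u)) r τ := by
      simpa using ((hasDerivAt_id τ).const_sub t).const_mul (-r)
    have := (h1.exp).div_const r
    simpa [mul_div_assoc, div_self hr.ne'] using this
  have hint : IntervalIntegrable (fun τ => Real.exp (-r * (t - τ))) volume 0 t := by
    apply Continuous.intervalIntegrable
    continuity
  rw [intervalIntegral.integral_eq_sub_of_hasDerivAt hderiv hint]
  simp only [sub_self, mul_zero, Real.exp_zero]
  rw [div_sub_div_same]
  gcongr
  nlinarith [Real.exp_pos (-r * (t - 0))]

/-- norm bound for `aInt` when `Re s = -r < 0`. -/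
lemma aInt_norm_le {X : Type*} [NormedAddCommGroup X] [NormedSpace ℂ X]
    (g : ℝ → X) (hg : ContDiff ℝ 1 g) {s : ℂ} {r t M : ℝ} (hr : 0 < r)
    (hs : s.re = -r) (ht : 0 ≤ t) (hM : ∀ τ ∈ Set.Icc (0:ℝ) t, ‖deriv g τ‖ ≤ M)
    (hM0 : 0 ≤ M) :
    ‖aInt g s t‖ ≤ M / r := by
  have hb : ∀ τ ∈ Set.uIoc (0:ℝ) t,
      ‖Complex.exp (s * (t - τ)) • deriv g τ‖ ≤ M * Real.exp (-r * (t - τ)) := by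
    intro τ hτ
    rw [Set.uIoc_of_le ht] at hτ
    rw [norm_smul, Complex.norm_exp]
    have hre : (s * ((t : ℂ) - (τ : ℂ))).re = -r * (t - τ) := by
      rw [show (t : ℂ) - (τ : ℂ) = ((t - τ : ℝ) : ℂ) by push_cast; ring,
        mul_comm, Complex.re_ofReal_mul, hs]
      ring
    rw [hre, mul_comm]
    exact mul_le_mul (hM τ ⟨hτ.1.le, hτ.2⟩) le_rfl (Real.exp_pos _).le hM0
  have hint : IntervalIntegrable (fun τ => M * Real.exp (-r * (t - τ))) volume 0 t := by
    apply Continuous.intervalIntegrable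
    continuity
  have h1 : ‖aInt g s t‖ ≤ |∫ τ in (0:ℝ)..t, M * Real.exp (-r * (t - τ))| :=
    (intervalIntegral.norm_integral_le_of_norm_le ht
      (ae_of_all _ fun τ hτ => hb τ (by rwa [Set.uIoc_of_le ht])) hint).trans (le_abs_self _)
  have h2 : (∫ τ in (0:ℝ)..t, M * Real.exp (-r * (t - τ)))
      = M * ∫ τ in (0:ℝ)..t, Real.exp (-r * (t - τ)) :=
    intervalIntegral.integral_const_mul _ _
  have h3 : (0:ℝ) ≤ ∫ τ in (0:ℝ)..t, Real.exp (-r * (t - τ)) :=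
    intervalIntegral.integral_nonneg ht fun τ _ => (Real.exp_pos _).le
  calc ‖aInt g s t‖ ≤ |∫ τ in (0:ℝ)..t, M * Real.exp (-r * (t - τ))| := h1
    _ = M * ∫ τ in (0:ℝ)..t, Real.exp (-r * (t - τ)) := by
        rw [h2, abs_of_nonneg (mul_nonneg hM0 h3)]
    _ ≤ M * (1 / r) := mul_le_mul_of_nonneg_left (exp_int_bound hr ht) hM0
    _ = M / r := by ring

theorem stmt10 {X Y : Type*} [NormedAddCommGroup X] [NormedSpace ℂ X] [CompleteSpace X]
    [NormedAddCommGroup Y] [NormedSpace ℂ Y] [CompleteSpace Y]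
    (c : ℝ) (hc : 0 < c) (φ : ℝ) (hφ : φ ∈ Set.Ioo 0 (π / 2))
    (μ : ℝ) (hμ0 : 0 ≤ μ) (hμ1 : μ < 1) (C₀ : ℝ) (hC₀ : 0 ≤ C₀) (t : ℝ) (ht : 0 ≤ t)
    (g : ℝ → X) (hg : ContDiff ℝ 1 g)
    (F : ℂ → X →L[ℂ] Y)
    (hFcont : ContinuousOn F
      {z : ℂ | ∃ ρ : ℝ, c ≤ ρ ∧ z = (ρ : ℂ) * Complex.exp (Complex.I * ((π : ℝ) - φ))})
    (hFbound : ∀ ρ : ℝ, c ≤ ρ →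
      ‖F ((ρ : ℂ) * Complex.exp (Complex.I * ((π : ℝ) - φ)))‖ ≤ C₀ * ρ ^ μ) :
    IntegrableOn (fun ρ : ℝ =>
        ρ⁻¹ • F ((ρ : ℂ) * Complex.exp (Complex.I * ((π : ℝ) - φ)))
          (aInt g ((ρ : ℂ) * Complex.exp (Complex.I * ((π : ℝ) - φ))) t))
      (Set.Ici c)
    ∧ ‖∫ ρ in Set.Ici c,
          ρ⁻¹ • F ((ρ : ℂ) * Complex.exp (Complex.I * ((π : ℝ) - φ)))
            (aInt g ((ρ : ℂ) * Complex.exp (Complex.I * ((π : ℝ) - φ))) t)‖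
        ≤ C₀ * (sSup ((fun τ => ‖deriv g τ‖) '' Set.Icc 0 t)) * c ^ (μ - 1)
            / ((1 - μ) * Real.cos φ) := by
  obtain ⟨hφ0, hφ2⟩ := hφ
  have hcos : 0 < Real.cos φ := Real.cos_pos_of_mem_Ioo ⟨by linarith [pi_pos], hφ2⟩
  set θ : ℂ := Complex.exp (Complex.I * ((π : ℝ) - φ)) with hθ
  set z : ℝ → ℂ := fun ρ => (ρ : ℂ) * θ with hz
  set M := sSup ((fun τ => ‖deriv g τ‖) '' Set.Icc 0 t) with hMdef
  -- continuity of deriv g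
  have hdc : Continuous (deriv g) := hg.continuous_deriv le_rfl
  -- M facts
  have hbdd : BddAbove ((fun τ => ‖deriv g τ‖) '' Set.Icc 0 t) :=
    (isCompact_Icc.image (hdc.norm)).bddAbove
  have hMb : ∀ τ ∈ Set.Icc (0:ℝ) t, ‖deriv g τ‖ ≤ M := fun τ hτ =>
    le_csSup hbdd ⟨τ, hτ, rfl⟩
  have hM0 : 0 ≤ M := le_trans (norm_nonneg _) (hMb 0 ⟨le_rfl, ht⟩)
  -- real part of z ρ
  have hzre : ∀ ρ : ℝ, (z ρ).re = -(ρ * Real.cos φ) := by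
    intro ρ
    have : θ = Complex.exp (((π - φ : ℝ) : ℂ) * Complex.I) := by
      rw [hθ]; push_cast; ring_nf
    rw [hz]
    simp only [Complex.re_ofReal_mul, this, Complex.exp_ofReal_mul_I_re, Real.cos_pi_sub]
    ring
  -- aInt bound
  have haInt : ∀ ρ : ℝ, c ≤ ρ → ‖aInt g (z ρ) t‖ ≤ M / (ρ * Real.cos φ) := by
    intro ρ hρ
    exact aInt_norm_le g hg (mul_pos (hc.trans_le hρ) hcos) (hzre ρ) ht hMb hM0
  -- pointwise bound
  set f : ℝ → Y := fun ρ => ρ⁻¹ • F (z ρ) (aInt g (z ρ) t) with hf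
  set B : ℝ → ℝ := fun ρ => (C₀ * M / Real.cos φ) * ρ ^ (μ - 2) with hB
  have hfB : ∀ ρ ∈ Set.Ici c, ‖f ρ‖ ≤ B ρ := by
    intro ρ hρ
    have hρ0 : 0 < ρ := hc.trans_le hρ
    have h1 : ‖f ρ‖ ≤ ρ⁻¹ * (C₀ * ρ ^ μ * (M / (ρ * Real.cos φ))) := by
      rw [hf, norm_smul, norm_inv, Real.norm_eq_abs, abs_of_pos hρ0]
      refine mul_le_mul_of_nonneg_left ?_ (by positivity)
      calc ‖F (z ρ) (aInt g (z ρ) t)‖ ≤ ‖F (z ρ)‖ * ‖aInt g (z ρ) t‖ :=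
            (F (z ρ)).le_opNorm _
        _ ≤ (C₀ * ρ ^ μ) * (M / (ρ * Real.cos φ)) :=
            mul_le_mul (hFbound ρ hρ) (haInt ρ hρ) (norm_nonneg _)
              (by positivity)
    refine h1.trans (le_of_eq ?_)
    have hrpow : ρ ^ (μ - 2) = ρ ^ μ * ρ⁻¹ * ρ⁻¹ := by
      rw [show μ - 2 = μ + -1 + -1 by ring, Real.rpow_add hρ0, Real.rpow_add hρ0,
        Real.rpow_neg_one]
    simp only [hB]
    rw [hrpow]
    field_simp
  -- B integrable on Ici c
  have hBint : IntegrableOn B (Set.Ici c) := by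
    rw [hB, IntegrableOn, Measure.restrict_congr_set Ioi_ae_eq_Ici.symm]
    exact (integrableOn_Ioi_rpow_of_lt (by linarith) hc).const_mul _
  -- measurability of f
  have hfc : ContinuousOn f (Set.Ici c) := by
    have hzc : Continuous z := by fun_prop
    have haC : Continuous fun ρ : ℝ => aInt g (z ρ) t := by
      apply intervalIntegral.continuous_parametric_intervalIntegral_of_continuous'
      apply Continuous.smul
      · exact Complex.continuous_exp.comp
          ((hzc.comp continuous_fst).mul (by fun_prop))
      · exact hdc.comp continuous_snd
    have hFz : ContinuousOn (fun ρ : ℝ => F (z ρ)) (Set.Ici c) :=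
      hFcont.comp hzc.continuousOn fun ρ hρ => ⟨ρ, hρ, rfl⟩
    have happ : ContinuousOn (fun ρ : ℝ => F (z ρ) (aInt g (z ρ) t)) (Set.Ici c) :=
      hFz.clm_apply haC.continuousOn
    have hinv : ContinuousOn (fun ρ : ℝ => ρ⁻¹) (Set.Ici c) :=
      continuousOn_inv₀.mono fun ρ (hρ : c ≤ ρ) => (ne_of_gt (hc.trans_le hρ) : ρ ≠ 0)
    exact hinv.smul happ
  have hfm : AEStronglyMeasurable f (volume.restrict (Set.Ici c)) :=
    hfc.aestronglyMeasurable measurableSet_Ici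
  have hfint : IntegrableOn f (Set.Ici c) :=
    Integrable.mono' hBint hfm
      ((ae_restrict_iff' measurableSet_Ici).2 (ae_of_all _ hfB))
  refine ⟨hfint, ?_⟩
  have hnorm : ‖∫ ρ in Set.Ici c, f ρ‖ ≤ ∫ ρ in Set.Ici c, B ρ :=
    norm_integral_le_of_norm_le hBint
      ((ae_restrict_iff' measurableSet_Ici).2 (ae_of_all _ hfB))
  refine hnorm.trans ?_
  have hBval : ∫ ρ in Set.Ici c, B ρ
      = (C₀ * M / Real.cos φ) * (-c ^ (μ - 2 + 1) / (μ - 2 + 1)) := by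
    rw [hB, setIntegral_congr_set Ioi_ae_eq_Ici.symm, integral_const_mul,
      integral_Ioi_rpow_of_lt (by linarith) hc]
  rw [hBval]
  have h21 : μ - 2 + 1 = μ - 1 := by ring
  rw [h21]
  have hμne : μ - 1 ≠ 0 := by linarith
  have h1μ : (1:ℝ) - μ ≠ 0 := by linarith
  refine le_of_eq ?_
  field_simp
  ring
end

section
/- Let X and Y be complex Banach spaces, let 0 ≤ μ < 1, let C_F : (0,∞) → (0,∞) be non-increasing, and let F : ℂ ∖ (−∞,0] → B(X,Y) be continuous with ‖F(s)‖ ≤ C_F(Re s^{1/2}) · |s|^μ for all s ∈ ℂ ∖ (−∞,0], where s^{1/2} is the principal square root. Let g : ℝ → X be continuously differentiable with g(τ) = 0 for all τ ≤ 0, and set a(s,t) := ∫_0^t e^{s(t−τ)} g'(τ) dτ. Fix c > 0, φ ∈ (0, π/2), t ≥ 0, and define I(t) := (1/2πi) [ − ∫_c^∞ ρ^{−1} F(ρ e^{−i(π−φ)}) a(ρ e^{−i(π−φ)}, t) dρ + i ∫_{−(π−φ)}^{π−φ} F(c e^{iθ}) a(c e^{iθ}, t) dθ + ∫_c^∞ ρ^{−1}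 F(ρ e^{i(π−φ)}) a(ρ e^{i(π−φ)}, t) dρ ] (all Bochner integrals, which exist). Then ‖I(t)‖ ≤ (1/π) · [ (π−φ) · c^μ · e^{c·t} · t + c^{μ−1} / ((1−μ)·cos φ) ] · C_F(√c · sin(φ/2)) · max_{0≤τ≤t} ‖g'(τ)‖. -/
open MeasureTheory Real

/-- The principal square root `s^{1/2} = |s|^{1/2} e^{i Arg(s)/2}`. -/
noncomputable def csqrt (s : ℂ) : ℂ :=
  (Real.sqrt (‖s‖) : ℂ) * Complex.exp (Complex.I * (s.arg / 2))

private lemma slit_aux (ρ θ : ℝ) (hρ : 0 < ρ) (hθ1 : -π < θ) (hθ2 : θ < π) :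
    ∀ x : ℝ, x ≤ 0 → (ρ:ℂ) * Complex.exp (Complex.I * θ) ≠ (x:ℂ) := by
  intro x hx h
  rw [mul_comm Complex.I, Complex.exp_mul_I] at h
  have him := congrArg Complex.im h
  have hre := congrArg Complex.re h
  simp [Complex.cos_ofReal_re, Complex.sin_ofReal_re] at him hre
  have hsin : Real.sin θ = 0 := by
    rcases him with h' | h'
    · exact absurd h' hρ.ne'
    · exact h'
  have : θ = 0 := by
    rwa [Real.sin_eq_zero_iff_of_lt_of_lt hθ1 hθ2] at hsin
  subst this
  simp at hre
  nlinarith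

private lemma abs_aux (ρ θ : ℝ) (hρ : 0 ≤ ρ) :
    ‖(ρ:ℂ) * Complex.exp (Complex.I * θ)‖ = ρ := by
  simp [Complex.norm_exp, abs_of_nonneg hρ]

private lemma re_aux (ρ θ : ℝ) :
    ((ρ:ℂ) * Complex.exp (Complex.I * θ)).re = ρ * Real.cos θ := by
  rw [mul_comm Complex.I, Complex.exp_mul_I]
  simp [Complex.cos_ofReal_re]

private lemma csqrt_re_aux (ρ θ : ℝ) (hρ : 0 < ρ) (hθ1 : -π < θ) (hθ2 : θ ≤ π) :
    (csqrt ((ρ:ℂ) * Complex.exp (Complex.I * θ))).re = Real.sqrt ρ * Real.cos (θ/2) := by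
  have habs := abs_aux ρ θ hρ.le
  have harg : ((ρ:ℂ) * Complex.exp (Complex.I * θ)).arg = θ := by
    rw [mul_comm Complex.I, Complex.exp_mul_I, Complex.arg_real_mul _ hρ,
      Complex.arg_cos_add_sin_mul_I ⟨hθ1, hθ2⟩]
  rw [csqrt, habs, harg]
  rw [mul_comm Complex.I]
  have : ((θ:ℂ)/2) = ((θ/2 : ℝ) : ℂ) := by push_cast; ring
  rw [this]
  simp only [Complex.mul_re, Complex.ofReal_re, Complex.ofReal_im, Complex.exp_ofReal_mul_I_re,
    zero_mul, sub_zero]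

private lemma exp_int_aux (b t : ℝ) (hb : 0 < b) :
    ∫ τ in (0:ℝ)..t, Real.exp (-b * (t - τ)) = (1 - Real.exp (-b * t)) / b := by
  have hd : ∀ τ ∈ Set.uIcc (0:ℝ) t, HasDerivAt (fun τ => Real.exp (-b * (t - τ)) / b)
      (Real.exp (-b * (t - τ))) τ := by
    intro τ _
    have h1 : HasDerivAt (fun τ : ℝ => -b * (t - τ)) b τ := by
      have := ((hasDerivAt_id τ).const_sub t).const_mul (-b)
      simpa using this
    have h2 := (h1.exp).div_const b
    rwa [mul_div_cancel_right₀ _ hb.ne'] at h2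
  have hcont : IntervalIntegrable (fun τ => Real.exp (-b * (t - τ))) volume 0 t :=
    (by fun_prop : Continuous fun τ : ℝ => Real.exp (-b * (t - τ))).intervalIntegrable _ _
  rw [intervalIntegral.integral_eq_sub_of_hasDerivAt hd hcont]
  simp
  ring

section
variable {X : Type*} [NormedAddCommGroup X] [NormedSpace ℂ X] [CompleteSpace X]

private lemma aInt_cont (g : ℝ → X) (hg : ContDiff ℝ 1 g) (t : ℝ) :
    Continuous fun s : ℂ => aInt g s t := by
  apply intervalIntegral.continuous_parametric_intervalIntegral_of_continuous'
  have hdg : Continuous (deriv g) := hg.continuous_deriv le_rfl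
  exact (Complex.continuous_exp.comp (by fun_prop)).smul (hdg.comp continuous_snd)

private lemma aInt_bound_arc (g : ℝ → X) (s : ℂ) (c t M : ℝ) (ht : 0 ≤ t) (hsre : s.re ≤ c)
    (hM : ∀ τ ∈ Set.Icc 0 t, ‖deriv g τ‖ ≤ M) (hc : 0 < c) :
    ‖aInt g s t‖ ≤ Real.exp (c * t) * M * t := by
  have h := intervalIntegral.norm_integral_le_of_norm_le_const
    (C := Real.exp (c * t) * M) (f := fun τ => Complex.exp (s * (t - τ)) • deriv g τ)
    (a := 0) (b := t) ?_
  · rw [aInt]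
    calc ‖∫ τ in (0:ℝ)..t, Complex.exp (s * (t - τ)) • deriv g τ‖
        ≤ Real.exp (c * t) * M * |t - 0| := h
      _ = Real.exp (c * t) * M * t := by rw [sub_zero, abs_of_nonneg ht]
  · intro x hx
    rw [Set.uIoc_of_le ht] at hx
    rw [norm_smul, Complex.norm_exp]
    have h1 : (s * (↑t - ↑x)).re = s.re * (t - x) := by
      simp [Complex.mul_re]
    rw [h1]
    have h2 : Real.exp (s.re * (t - x)) ≤ Real.exp (c * t) := by
      apply Real.exp_le_exp.2
      nlinarith [hx.1.le, hx.2, hsre, hc.le]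
    exact mul_le_mul h2 (hM x ⟨hx.1.le, hx.2⟩) (norm_nonneg _) (Real.exp_pos _).le

private lemma aInt_bound_ray (g : ℝ → X) (s : ℂ) (b t M : ℝ) (ht : 0 ≤ t) (hb : 0 < b)
    (hM0 : 0 ≤ M) (hsre : s.re = -b) (hM : ∀ τ ∈ Set.Icc 0 t, ‖deriv g τ‖ ≤ M) :
    ‖aInt g s t‖ ≤ M / b := by
  have hint := exp_int_aux b t hb
  have hbd : ∀ᵐ (τ : ℝ) ∂(volume.restrict (Set.uIoc (0:ℝ) t)),
      ‖Complex.exp (s * (t - τ)) • deriv g τ‖ ≤ M * Real.exp (-b * (t - τ)) := by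
    rw [ae_restrict_iff' measurableSet_uIoc]
    filter_upwards with τ hτ
    rw [Set.uIoc_of_le ht] at hτ
    rw [norm_smul, Complex.norm_exp]
    have h1 : (s * (↑t - ↑τ)).re = -b * (t - τ) := by
      simp [Complex.mul_re, hsre]
    rw [h1, mul_comm M]
    exact mul_le_mul_of_nonneg_left (hM τ ⟨hτ.1.le, hτ.2⟩) (Real.exp_pos _).le
  have hgint : IntervalIntegrable (fun τ => M * Real.exp (-b * (t - τ))) volume 0 t :=
    (by fun_prop : Continuous fun τ : ℝ => M * Real.exp (-b * (t - τ))).intervalIntegrable _ _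
  have h := intervalIntegral.norm_integral_le_abs_of_norm_le hbd hgint
  rw [aInt]
  refine h.trans ?_
  rw [intervalIntegral.integral_const_mul, hint]
  have hexp1 : Real.exp (-b * t) ≤ 1 := Real.exp_le_one_iff.mpr (by nlinarith)
  rw [abs_of_nonneg (mul_nonneg hM0 (div_nonneg (by linarith) hb.le))]
  have h1 : (1 - Real.exp (-b*t))/b ≤ 1/b :=
    (div_le_div_iff_of_pos_right hb).mpr (by nlinarith [Real.exp_pos (-b*t)])
  calc M * ((1 - Real.exp (-b*t))/b) ≤ M * (1/b) := mul_le_mul_of_nonneg_left h1 hM0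
    _ = M / b := by ring

end

theorem stmt11 {X Y : Type*} [NormedAddCommGroup X] [NormedSpace ℂ X] [CompleteSpace X]
    [NormedAddCommGroup Y] [NormedSpace ℂ Y] [CompleteSpace Y]
    (μ : ℝ) (hμ0 : 0 ≤ μ) (hμ1 : μ < 1)
    (CF : ℝ → ℝ) (hCFpos : ∀ x : ℝ, 0 < x → 0 < CF x)
    (hCFanti : ∀ x y : ℝ, 0 < x → x ≤ y → CF y ≤ CF x)
    (F : ℂ → X →L[ℂ] Y)
    (hFcont : ContinuousOn F {s : ℂ | ∀ x : ℝ, x ≤ 0 → s ≠ (x : ℂ)})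
    (hFbound : ∀ s : ℂ, (∀ x : ℝ, x ≤ 0 → s ≠ (x : ℂ)) →
      ‖F s‖ ≤ CF (csqrt s).re * ‖s‖ ^ μ)
    (g : ℝ → X) (hg : ContDiff ℝ 1 g) (hgcausal : ∀ τ : ℝ, τ ≤ 0 → g τ = 0)
    (c φ t : ℝ) (hc : 0 < c) (hφ : φ ∈ Set.Ioo 0 (π / 2)) (ht : 0 ≤ t) :
    IntegrableOn (fun ρ : ℝ =>
        ((ρ : ℂ))⁻¹ • F ((ρ : ℂ) * Complex.exp (-Complex.I * ((π : ℝ) - φ)))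
          (aInt g ((ρ : ℂ) * Complex.exp (-Complex.I * ((π : ℝ) - φ))) t))
      (Set.Ici c)
    ∧ IntegrableOn (fun ρ : ℝ =>
        ((ρ : ℂ))⁻¹ • F ((ρ : ℂ) * Complex.exp (Complex.I * ((π : ℝ) - φ)))
          (aInt g ((ρ : ℂ) * Complex.exp (Complex.I * ((π : ℝ) - φ))) t))
      (Set.Ici c)
    ∧ ‖(2 * (π : ℂ) * Complex.I)⁻¹ •
          (-(∫ ρ in Set.Ici c,
              ((ρ : ℂ))⁻¹ • F ((ρ : ℂ) * Complex.exp (-Complex.I * ((π : ℝ) - φ)))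
                (aInt g ((ρ : ℂ) * Complex.exp (-Complex.I * ((π : ℝ) - φ))) t))
            + Complex.I • (∫ θ in (-(π - φ))..(π - φ),
                F ((c : ℂ) * Complex.exp (Complex.I * θ))
                  (aInt g ((c : ℂ) * Complex.exp (Complex.I * θ)) t))
            + ∫ ρ in Set.Ici c,
                ((ρ : ℂ))⁻¹ • F ((ρ : ℂ) * Complex.exp (Complex.I * ((π : ℝ) - φ)))
                  (aInt g ((ρ : ℂ) * Complex.exp (Complex.I * ((π : ℝ) - φ))) t))‖
        ≤ (1 / π) * ((π - φ) * c ^ μ * Real.exp (c * t) * t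
              + c ^ (μ - 1) / ((1 - μ) * Real.cos φ))
            * CF (Real.sqrt c * Real.sin (φ / 2))
            * sSup ((fun τ => ‖deriv g τ‖) '' Set.Icc 0 t) := by
  obtain ⟨hφ0, hφ2⟩ := hφ
  have hπ := Real.pi_pos
  have hφπ : φ < π := by linarith
  set M : ℝ := sSup ((fun τ => ‖deriv g τ‖) '' Set.Icc 0 t) with hM_def
  have hdg : Continuous (deriv g) := hg.continuous_deriv le_rfl
  have hMbd : ∀ τ ∈ Set.Icc (0:ℝ) t, ‖deriv g τ‖ ≤ M := fun τ hτ =>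
    le_csSup ((isCompact_Icc.image (continuous_norm.comp hdg)).bddAbove) ⟨τ, hτ, rfl⟩
  have hM0 : 0 ≤ M := le_trans (norm_nonneg _) (hMbd 0 ⟨le_rfl, ht⟩)
  have hcosφ : 0 < Real.cos φ := Real.cos_pos_of_mem_Ioo ⟨by linarith, hφ2⟩
  have hsin2 : 0 < Real.sin (φ/2) := Real.sin_pos_of_pos_of_lt_pi (by linarith) (by linarith)
  have hsqc : 0 < Real.sqrt c := Real.sqrt_pos.mpr hc
  set CF0 : ℝ := CF (Real.sqrt c * Real.sin (φ / 2)) with hCF0_def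
  have hCF0 : 0 < CF0 := hCFpos _ (by positivity)
  set K : ℝ := CF0 * M / Real.cos φ with hK_def
  have hKnn : 0 ≤ K := by positivity
  -- the general ray estimate
  have ray : ∀ θ : ℝ, -π < θ → θ < π → Real.cos θ = -Real.cos φ →
      Real.cos (θ/2) = Real.sin (φ/2) →
      IntegrableOn (fun ρ : ℝ => ((ρ : ℂ))⁻¹ •
          F ((ρ : ℂ) * Complex.exp (Complex.I * θ))
            (aInt g ((ρ : ℂ) * Complex.exp (Complex.I * θ)) t)) (Set.Ici c)
      ∧ ‖∫ ρ in Set.Ici c, ((ρ : ℂ))⁻¹ •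
          F ((ρ : ℂ) * Complex.exp (Complex.I * θ))
            (aInt g ((ρ : ℂ) * Complex.exp (Complex.I * θ)) t)‖
        ≤ K * (c ^ (μ - 1) / (1 - μ)) := by
    intro θ hθ1 hθ2 hcosθ hcosθ2
    set s : ℝ → ℂ := fun ρ => (ρ : ℂ) * Complex.exp (Complex.I * θ) with hs_def
    set f : ℝ → Y := fun ρ => ((ρ : ℂ))⁻¹ • F (s ρ) (aInt g (s ρ) t) with hf_def
    have hpt : ∀ ρ ∈ Set.Ici c, ‖f ρ‖ ≤ K * ρ ^ (μ - 2) := by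
      intro ρ hρ
      have hρc : c ≤ ρ := hρ
      have hρ0 : 0 < ρ := lt_of_lt_of_le hc hρc
      have hslit := slit_aux ρ θ hρ0 hθ1 hθ2
      have hFb := hFbound _ hslit
      rw [csqrt_re_aux ρ θ hρ0 hθ1 hθ2.le, abs_aux ρ θ hρ0.le] at hFb
      have hle : CF (Real.sqrt ρ * Real.cos (θ/2)) ≤ CF0 := by
        rw [hcosθ2]
        exact hCFanti _ _ (by positivity)
          (mul_le_mul_of_nonneg_right (Real.sqrt_le_sqrt hρc) hsin2.le)
      have hFb2 : ‖F (s ρ)‖ ≤ CF0 * ρ ^ μ :=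
        hFb.trans (mul_le_mul_of_nonneg_right hle (Real.rpow_nonneg hρ0.le μ))
      have hsre : (s ρ).re = -(ρ * Real.cos φ) := by
        rw [hs_def]; rw [re_aux, hcosθ]; ring
      have haI : ‖aInt g (s ρ) t‖ ≤ M / (ρ * Real.cos φ) :=
        aInt_bound_ray g (s ρ) (ρ * Real.cos φ) t M ht (by positivity) hM0 hsre hMbd
      have hnormρ : ‖((ρ:ℂ))⁻¹‖ = ρ⁻¹ := by
        rw [norm_inv, Complex.norm_real, Real.norm_eq_abs, abs_of_pos hρ0]
      calc ‖f ρ‖ = ρ⁻¹ * ‖F (s ρ) (aInt g (s ρ) t)‖ := by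
            rw [hf_def, norm_smul, hnormρ]
        _ ≤ ρ⁻¹ * (‖F (s ρ)‖ * ‖aInt g (s ρ) t‖) := by
            exact mul_le_mul_of_nonneg_left ((F (s ρ)).le_opNorm _) (by positivity)
        _ ≤ ρ⁻¹ * ((CF0 * ρ ^ μ) * (M / (ρ * Real.cos φ))) := by
            apply mul_le_mul_of_nonneg_left _ (by positivity)
            exact mul_le_mul hFb2 haI (norm_nonneg _) (by positivity)
        _ = K * ρ ^ (μ - 2) := by
            have hrw : ρ ^ (μ - 2) = ρ ^ μ * (ρ⁻¹ * ρ⁻¹) := by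
              rw [show μ - 2 = μ + (-1) + (-1) by ring, Real.rpow_add hρ0,
                Real.rpow_add hρ0, Real.rpow_neg_one]
              ring
            rw [hrw, hK_def]
            field_simp
    have hcont : ContinuousOn f (Set.Ici c) := by
      have hsc : Continuous s := by
        rw [hs_def]; fun_prop
      have hmap : ∀ ρ ∈ Set.Ici c, s ρ ∈ {z : ℂ | ∀ x : ℝ, x ≤ 0 → z ≠ (x : ℂ)} :=
        fun ρ hρ => slit_aux ρ θ (lt_of_lt_of_le hc hρ) hθ1 hθ2
      have h1 : ContinuousOn (fun ρ : ℝ => F (s ρ)) (Set.Ici c) :=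
        hFcont.comp hsc.continuousOn hmap
      have h2 : Continuous fun ρ : ℝ => aInt g (s ρ) t := (aInt_cont g hg t).comp hsc
      have h3 : ContinuousOn (fun ρ : ℝ => ((ρ:ℂ))⁻¹) (Set.Ici c) := by
        apply ContinuousOn.inv₀ (Complex.continuous_ofReal.continuousOn)
        intro ρ hρ
        exact_mod_cast (lt_of_lt_of_le hc hρ).ne'
      exact h3.smul (h1.clm_apply h2.continuousOn)
    have hKint : IntegrableOn (fun ρ : ℝ => K * ρ ^ (μ - 2)) (Set.Ici c) := by
      rw [integrableOn_Ici_iff_integrableOn_Ioi]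
      exact (integrableOn_Ioi_rpow_of_lt (by linarith) hc).const_mul K
    have haebd : ∀ᵐ ρ ∂(volume.restrict (Set.Ici c)), ‖f ρ‖ ≤ K * ρ ^ (μ - 2) := by
      rw [ae_restrict_iff' measurableSet_Ici]
      filter_upwards with ρ hρ using hpt ρ hρ
    have hInt : IntegrableOn f (Set.Ici c) :=
      Integrable.mono' hKint (hcont.aestronglyMeasurable measurableSet_Ici) haebd
    refine ⟨hInt, ?_⟩
    have hval : ∫ ρ in Set.Ici c, K * ρ ^ (μ - 2) = K * (c ^ (μ - 1) / (1 - μ)) := by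
      rw [integral_Ici_eq_integral_Ioi, integral_const_mul,
        integral_Ioi_rpow_of_lt (by linarith) hc]
      rw [show μ - 2 + 1 = μ - 1 by ring]
      have h1 : μ - 1 ≠ 0 := by linarith
      have h2 : (1:ℝ) - μ ≠ 0 := by linarith
      congr 1
      field_simp
      ring
    calc ‖∫ ρ in Set.Ici c, f ρ‖ ≤ ∫ ρ in Set.Ici c, K * ρ ^ (μ - 2) :=
          norm_integral_le_of_norm_le hKint haebd
      _ = K * (c ^ (μ - 1) / (1 - μ)) := hval
  have hrayp := ray (π - φ) (by linarith) (by linarith)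
    (by rw [Real.cos_pi_sub])
    (by rw [show (π - φ)/2 = π/2 - φ/2 by ring, Real.cos_pi_div_two_sub])
  have hraym := ray (-(π - φ)) (by linarith) (by linarith)
    (by rw [Real.cos_neg, Real.cos_pi_sub])
    (by rw [show (-(π - φ))/2 = -((π - φ)/2) by ring, Real.cos_neg,
        show (π - φ)/2 = π/2 - φ/2 by ring, Real.cos_pi_div_two_sub])
  have eneg : Complex.exp (-Complex.I * ((π : ℝ) - φ))
      = Complex.exp (Complex.I * ((-(π - φ) : ℝ) : ℂ)) := by
    congr 1; push_cast; ring
  have epos : Complex.exp (Complex.I * ((π : ℝ) - φ))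
      = Complex.exp (Complex.I * (((π - φ) : ℝ) : ℂ)) := by
    congr 1; push_cast; ring
  rw [eneg, epos]
  refine ⟨hraym.1, hrayp.1, ?_⟩
  -- arc estimate
  have harc : ‖∫ θ in (-(π - φ))..(π - φ),
      F ((c:ℂ) * Complex.exp (Complex.I * θ))
        (aInt g ((c:ℂ) * Complex.exp (Complex.I * θ)) t)‖
      ≤ (CF0 * c ^ μ * (Real.exp (c*t) * M * t)) * (2*(π - φ)) := by
    have h := intervalIntegral.norm_integral_le_of_norm_le_const
      (C := CF0 * c ^ μ * (Real.exp (c*t) * M * t))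
      (f := fun θ : ℝ => F ((c:ℂ) * Complex.exp (Complex.I * θ))
        (aInt g ((c:ℂ) * Complex.exp (Complex.I * θ)) t))
      (a := -(π - φ)) (b := π - φ) ?_
    · refine h.trans ?_
      rw [show (π - φ) - (-(π - φ)) = 2*(π - φ) by ring, abs_of_nonneg (by linarith)]
    · intro θ hθ
      rw [Set.uIoc_of_le (by linarith : -(π - φ) ≤ π - φ)] at hθ
      have hθ1 : -π < θ := by linarith [hθ.1]
      have hθ2 : θ < π := by linarith [hθ.2]
      have hslit := slit_aux c θ hc hθ1 hθ2
      have hFb := hFbound _ hslit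
      rw [csqrt_re_aux c θ hc hθ1 hθ2.le, abs_aux c θ hc.le] at hFb
      have hcosle : Real.sin (φ/2) ≤ Real.cos (θ/2) := by
        rw [← Real.cos_abs (θ/2),
          show Real.sin (φ/2) = Real.cos (π/2 - φ/2) by rw [Real.cos_pi_div_two_sub]]
        apply Real.cos_le_cos_of_nonneg_of_le_pi (abs_nonneg _) (by linarith)
        have habs : |θ| ≤ π - φ := abs_le.mpr ⟨by linarith [hθ.1], hθ.2⟩
        calc |θ/2| = |θ|/2 := by rw [abs_div, abs_two]
          _ ≤ (π - φ)/2 := by linarith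
          _ = π/2 - φ/2 := by ring
      have hle : CF (Real.sqrt c * Real.cos (θ/2)) ≤ CF0 :=
        hCFanti _ _ (by positivity) (mul_le_mul_of_nonneg_left hcosle hsqc.le)
      have hFb2 : ‖F ((c:ℂ) * Complex.exp (Complex.I * θ))‖ ≤ CF0 * c ^ μ :=
        hFb.trans (mul_le_mul_of_nonneg_right hle (Real.rpow_nonneg hc.le μ))
      have hsre : ((c:ℂ) * Complex.exp (Complex.I * θ)).re ≤ c := by
        rw [re_aux]; nlinarith [Real.cos_le_one θ]
      have haI := aInt_bound_arc g ((c:ℂ) * Complex.exp (Complex.I * θ)) c t M ht hsre hMbd hc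
      calc ‖F ((c:ℂ) * Complex.exp (Complex.I * θ))
            (aInt g ((c:ℂ) * Complex.exp (Complex.I * θ)) t)‖
          ≤ ‖F ((c:ℂ) * Complex.exp (Complex.I * θ))‖
            * ‖aInt g ((c:ℂ) * Complex.exp (Complex.I * θ)) t‖ :=
            (F _).le_opNorm _
        _ ≤ (CF0 * c ^ μ) * (Real.exp (c*t) * M * t) := by
            apply mul_le_mul hFb2 haI (norm_nonneg _) (by positivity)
        _ = CF0 * c ^ μ * (Real.exp (c*t) * M * t) := by ring
  have hnorm : ‖(2 * (π:ℂ) * Complex.I)⁻¹‖ = (2*π)⁻¹ := by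
    rw [norm_inv]
    simp [Complex.norm_real, abs_of_pos hπ]
  rw [norm_smul, hnorm]
  have tri : ∀ A B C : Y, ‖-A + Complex.I • B + C‖ ≤ ‖A‖ + ‖B‖ + ‖C‖ := by
    intro A B C
    calc ‖-A + Complex.I • B + C‖ ≤ ‖-A + Complex.I • B‖ + ‖C‖ := norm_add_le _ _
      _ ≤ ‖-A‖ + ‖Complex.I • B‖ + ‖C‖ := by gcongr; exact norm_add_le _ _
      _ = ‖A‖ + ‖B‖ + ‖C‖ := by
          rw [norm_neg, norm_smul, Complex.norm_I, one_mul]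
  refine le_trans (mul_le_mul_of_nonneg_left (tri _ _ _) (by positivity)) ?_
  have hsum : ‖∫ ρ in Set.Ici c, ((ρ : ℂ))⁻¹ •
        F ((ρ : ℂ) * Complex.exp (Complex.I * ((-(π - φ) : ℝ) : ℂ)))
          (aInt g ((ρ : ℂ) * Complex.exp (Complex.I * ((-(π - φ) : ℝ) : ℂ))) t)‖
      + ‖∫ θ in (-(π - φ))..(π - φ),
          F ((c : ℂ) * Complex.exp (Complex.I * θ))
            (aInt g ((c : ℂ) * Complex.exp (Complex.I * θ)) t)‖
      + ‖∫ ρ in Set.Ici c, ((ρ : ℂ))⁻¹ •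
          F ((ρ : ℂ) * Complex.exp (Complex.I * (((π - φ) : ℝ) : ℂ)))
            (aInt g ((ρ : ℂ) * Complex.exp (Complex.I * (((π - φ) : ℝ) : ℂ))) t)‖
      ≤ K * (c ^ (μ - 1) / (1 - μ)) + (CF0 * c ^ μ * (Real.exp (c*t) * M * t)) * (2*(π - φ))
        + K * (c ^ (μ - 1) / (1 - μ)) :=
    add_le_add (add_le_add hraym.2 harc) hrayp.2
  refine le_trans (mul_le_mul_of_nonneg_left hsum (by positivity)) (le_of_eq ?_)
  rw [hK_def]
  have h2 : (1:ℝ) - μ ≠ 0 := by linarith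
  field_simp
  ring
end
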